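/- Let N, m, n be positive integers with m odd, m ≥ 3, n ≡ N (mod 2), n ≥ N, and such that either m ≥ 5 or n ≥ 3N. Let A, B, Ω be real numbers and set u(τ,x) = A·cos τ·sin(N x) + B·cos(m τ)·sin(n x), and let R(τ,x) = Ω² ∂²_τ u(τ,x) − ∂²_x u(τ,x) + u(τ,x)³/sin²x. Then ∫₀^{2π} ∫₀^π R(τ,x)·cos τ·sin(N x) dx dτ = (π²/8)·A·(3N·A² + 6N·B² − 4Ω² + 4N²) and ∫₀^{2π} ∫₀^π R(τ,x)·cos(m τ)·sin(n x) dx dτ = (π²/8)·B·(6N·A² + 3n·B² − 4m²·Ω² + 4n²). -/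

import Mathlib

open Real Set intervalIntegral

lemma intcos_pi (k : ℤ) : ∫ x in (0:ℝ)..π, Real.cos (k * x) = if k = 0 then π else 0 := by
  by_cases hk : k = 0
  · simp [hk]
  · have hk' : (k:ℝ) ≠ 0 := Int.cast_ne_zero.2 hk
    rw [if_neg hk]
    rw [intervalIntegral.integral_comp_mul_left (a := (0:ℝ)) (b := π) (fun y => Real.cos y) hk']
    simp [Real.sin_int_mul_pi]

lemma intcos_2pi (k : ℤ) : ∫ x in (0:ℝ)..(2*π), Real.cos (k * x) = if k = 0 then 2*π else 0 := by
  by_cases hk : k = 0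
  · simp [hk]
  · have hk' : (k:ℝ) ≠ 0 := Int.cast_ne_zero.2 hk
    rw [if_neg hk]
    rw [intervalIntegral.integral_comp_mul_left (a := (0:ℝ)) (b := 2*π) (fun y => Real.cos y) hk']
    have h2 : Real.sin ((k:ℝ) * (2*π)) = 0 := by
      rw [show (k:ℝ)*(2*π) = ((2*k:ℤ):ℝ)*π by push_cast; ring]; exact Real.sin_int_mul_pi _
    simp [integral_cos, h2]

/-- product-to-sum helper -/
lemma coscos_eq (j k : ℤ) (x : ℝ) :
    Real.cos (j*x) * Real.cos (k*x)
      = Real.cos (((j-k:ℤ):ℝ)*x)/2 + Real.cos (((j+k:ℤ):ℝ)*x)/2 := by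
  push_cast
  rw [show ((j:ℝ)-k)*x = j*x - k*x by ring, show ((j:ℝ)+k)*x = j*x + k*x by ring,
    Real.cos_add, Real.cos_sub]
  ring

lemma ii_cos (k : ℤ) (a b : ℝ) : IntervalIntegrable (fun x => Real.cos ((k:ℝ)*x)) MeasureTheory.volume a b :=
  (Real.continuous_cos.comp (continuous_const.mul continuous_id)).intervalIntegrable a b

lemma ccpi (j k : ℤ) : ∫ x in (0:ℝ)..π, Real.cos (j*x) * Real.cos (k*x)
    = (if j = k then π/2 else 0) + (if j = -k then π/2 else 0) := by
  have : (fun x => Real.cos ((j:ℝ)*x) * Real.cos ((k:ℝ)*x))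
      = fun x => Real.cos (((j-k:ℤ):ℝ)*x)/2 + Real.cos (((j+k:ℤ):ℝ)*x)/2 := by
    funext x; exact coscos_eq j k x
  rw [this, intervalIntegral.integral_add ((ii_cos (j-k) 0 π).div_const 2)
    ((ii_cos (j+k) 0 π).div_const 2), intervalIntegral.integral_div,
    intervalIntegral.integral_div, intcos_pi, intcos_pi]
  simp only [sub_eq_zero, add_eq_zero_iff_eq_neg]
  by_cases h1 : j = k <;> by_cases h2 : j = -k <;> simp [h1, h2] <;> split_ifs <;> ring

lemma cc2pi (j k : ℤ) : ∫ x in (0:ℝ)..(2*π), Real.cos (j*x) * Real.cos (k*x)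
    = (if j = k then π else 0) + (if j = -k then π else 0) := by
  have : (fun x => Real.cos ((j:ℝ)*x) * Real.cos ((k:ℝ)*x))
      = fun x => Real.cos (((j-k:ℤ):ℝ)*x)/2 + Real.cos (((j+k:ℤ):ℝ)*x)/2 := by
    funext x; exact coscos_eq j k x
  rw [this, intervalIntegral.integral_add ((ii_cos (j-k) 0 (2*π)).div_const 2)
    ((ii_cos (j+k) 0 (2*π)).div_const 2), intervalIntegral.integral_div,
    intervalIntegral.integral_div, intcos_2pi, intcos_2pi]
  simp only [sub_eq_zero, add_eq_zero_iff_eq_neg]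
  by_cases h1 : j = k <;> by_cases h2 : j = -k <;> simp [h1, h2] <;> split_ifs <;> ring

lemma cccpi (u v c : ℤ) : ∫ x in (0:ℝ)..π, Real.cos (u*x) * Real.cos (v*x) * Real.cos (c*x)
    = ((if u-v = c then π/2 else 0) + (if u-v = -c then π/2 else 0))/2
    + ((if u+v = c then π/2 else 0) + (if u+v = -c then π/2 else 0))/2 := by
  have : (fun x => Real.cos ((u:ℝ)*x) * Real.cos ((v:ℝ)*x) * Real.cos ((c:ℝ)*x))
      = fun x => (Real.cos (((u-v:ℤ):ℝ)*x) * Real.cos ((c:ℝ)*x))/2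
        + (Real.cos (((u+v:ℤ):ℝ)*x) * Real.cos ((c:ℝ)*x))/2 := by
    funext x; rw [coscos_eq u v x]; ring
  rw [this, intervalIntegral.integral_add (((ii_cos (u-v) 0 π).mul_continuousOn ?_).div_const 2)
    (((ii_cos (u+v) 0 π).mul_continuousOn ?_).div_const 2)]
  · rw [intervalIntegral.integral_div, intervalIntegral.integral_div, ccpi, ccpi]
  · exact (Real.continuous_cos.comp (continuous_const.mul continuous_id)).continuousOn
  · exact (Real.continuous_cos.comp (continuous_const.mul continuous_id)).continuousOn


lemma two_step {P : ℕ → Prop} (h0 : P 0) (h1 : P 1) (hstep : ∀ a, P a → P (a+2)) : ∀ a, P a := by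
  have h : ∀ a, P a ∧ P (a+1) := by
    intro a
    induction a with
    | zero => exact ⟨h0, h1⟩
    | succ b ih => exact ⟨ih.2, hstep b ih.1⟩
  exact fun a => (h a).1

noncomputable def DD : ℕ → ℝ → ℝ
  | 0, _ => 0
  | 1, _ => 1
  | (a+2), x => DD a x + 2 * Real.cos (((a:ℝ)+1) * x)

lemma contDD (a : ℕ) : Continuous (DD a) := by
  induction a using two_step with
  | h0 => simpa [DD] using continuous_const
  | h1 => simpa [DD] using continuous_const
  | hstep a ih =>
    show Continuous fun x => DD a x + 2 * Real.cos (((a:ℝ)+1) * x)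
    exact ih.add (continuous_const.mul (Real.continuous_cos.comp (continuous_const.mul continuous_id)))

lemma sinDD (a : ℕ) : ∀ x : ℝ, Real.sin ((a:ℝ) * x) = Real.sin x * DD a x := by
  induction a using two_step with
  | h0 => intro x; simp [DD]
  | h1 => intro x; simp [DD]
  | hstep a ih =>
    intro x
    show Real.sin (((a+2:ℕ):ℝ) * x) = Real.sin x * (DD a x + 2 * Real.cos (((a:ℝ)+1) * x))
    have h1 : ((a+2:ℕ):ℝ)*x = ((a:ℝ)+1)*x + x := by push_cast; ring
    have h2 : (a:ℝ)*x = ((a:ℝ)+1)*x - x := by ring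
    rw [h1, Real.sin_add, mul_add, ← ih x, h2, Real.sin_sub]
    ring

lemma swapDD (a b : ℕ) (x : ℝ) : DD a x * Real.sin ((b:ℝ)*x) = DD b x * Real.sin ((a:ℝ)*x) := by
  rw [sinDD, sinDD]; ring

lemma iiDD_mul {f : ℝ → ℝ} (hf : Continuous f) (a : ℕ) (lo hi : ℝ) :
    IntervalIntegrable (fun x => DD a x * f x) MeasureTheory.volume lo hi :=
  ((contDD a).mul hf).intervalIntegrable lo hi


lemma cont_cosk (k : ℤ) : Continuous fun x : ℝ => Real.cos ((k:ℝ)*x) :=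
  Real.continuous_cos.comp (continuous_const.mul continuous_id)

/-- orthogonality of `DD a` against high frequencies -/
lemma DDorth : ∀ (a : ℕ) (c : ℤ), (a:ℤ) ≤ c →
    ∫ x in (0:ℝ)..π, DD a x * Real.cos ((c:ℝ)*x) = 0 := by
  intro a
  induction a using two_step with
  | h0 => intro c hc; simp [DD]
  | h1 =>
    intro c hc
    have h : (fun x => DD 1 x * Real.cos ((c:ℝ)*x)) = fun x => Real.cos ((c:ℝ)*x) := by
      funext x; simp [DD]
    rw [h, intcos_pi, if_neg (by omega)]
  | hstep a ih =>
    intro c hc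
    have key : (fun x => DD (a+2) x * Real.cos ((c:ℝ)*x))
        = fun x => DD a x * Real.cos ((c:ℝ)*x)
          + 2 * (Real.cos ((((a+1:ℕ):ℤ):ℝ)*x) * Real.cos ((c:ℝ)*x)) := by
      funext x
      show (DD a x + 2 * Real.cos (((a:ℝ)+1) * x)) * Real.cos ((c:ℝ)*x) = _
      push_cast
      ring
    have i1 : IntervalIntegrable (fun x => DD a x * Real.cos ((c:ℝ)*x)) MeasureTheory.volume 0 π :=
      ((contDD a).mul (cont_cosk c)).intervalIntegrable 0 π
    have i2 : IntervalIntegrable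
        (fun x => 2 * (Real.cos ((((a+1:ℕ):ℤ):ℝ)*x) * Real.cos ((c:ℝ)*x))) MeasureTheory.volume 0 π :=
      (continuous_const.mul ((cont_cosk _).mul (cont_cosk c))).intervalIntegrable 0 π
    rw [key, intervalIntegral.integral_add i1 i2, intervalIntegral.integral_const_mul,
      ih c (by omega), ccpi, if_neg (by omega), if_neg (by omega)]
    ring

/-- `∫ DD a ^2 * cos(c x) = 0` for `c  >= 2a - 1` -/
lemma DDsq_orth : ∀ (a : ℕ) (c : ℤ), 2*(a:ℤ) - 1 ≤ c →
    ∫ x in (0:ℝ)..π, (DD a x)^2 * Real.cos ((c:ℝ)*x) = 0 := by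
  intro a
  induction a using two_step with
  | h0 => intro c hc; simp [DD]
  | h1 =>
    intro c hc
    have h : (fun x => (DD 1 x)^2 * Real.cos ((c:ℝ)*x)) = fun x => Real.cos ((c:ℝ)*x) := by
      funext x; simp [DD]
    rw [h, intcos_pi, if_neg (by omega)]
  | hstep a ih =>
    intro c hc
    have key : (fun x => (DD (a+2) x)^2 * Real.cos ((c:ℝ)*x))
        = fun x => (DD a x)^2 * Real.cos ((c:ℝ)*x)
          + (2 * (DD a x * Real.cos (((c-(a:ℤ)-1:ℤ):ℝ)*x)) + 2 * (DD a x * Real.cos (((c+(a:ℤ)+1:ℤ):ℝ)*x)))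
          + (2 * Real.cos ((c:ℝ)*x) + 2 * (Real.cos (((2*(a:ℤ)+2:ℤ):ℝ)*x) * Real.cos ((c:ℝ)*x))) := by
      funext x
      show (DD a x + 2 * Real.cos (((a:ℝ)+1) * x))^2 * Real.cos ((c:ℝ)*x) = _
      have e1 := coscos_eq ((a:ℤ)+1) c x
      have e2 := coscos_eq ((a:ℤ)+1) ((a:ℤ)+1) x
      have e1' : Real.cos (((c:ℝ)-(a:ℝ)-1)*x) = Real.cos (((a:ℝ)+1-(c:ℝ))*x) := by
        rw [show ((c:ℝ)-(a:ℝ)-1)*x = -((((a:ℝ)+1-(c:ℝ)))*x) by ring, Real.cos_neg]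
      have e3 : Real.cos (((a:ℝ)+1-((a:ℝ)+1))*x) = 1 := by norm_num
      push_cast at e1 e2 ⊢
      have e4 : Real.cos (((a:ℝ)+1+(c:ℝ))*x) = Real.cos (((c:ℝ)+(a:ℝ)+1)*x) := by ring_nf
      have e5 : Real.cos (((a:ℝ)+1+((a:ℝ)+1))*x) = Real.cos ((2*(a:ℝ)+2)*x) := by ring_nf
      linear_combination (4*DD a x)*e1 + (4*Real.cos ((c:ℝ)*x))*e2 - (2*DD a x)*e1'
        + 2*Real.cos ((c:ℝ)*x)*e3 + (2*DD a x)*e4 + (2*Real.cos ((c:ℝ)*x))*e5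
    have i1 : IntervalIntegrable (fun x => (DD a x)^2 * Real.cos ((c:ℝ)*x)) MeasureTheory.volume 0 π :=
      (((contDD a).pow 2).mul (cont_cosk c)).intervalIntegrable 0 π
    have i2 : IntervalIntegrable (fun x =>
        2 * (DD a x * Real.cos (((c-(a:ℤ)-1:ℤ):ℝ)*x)) + 2 * (DD a x * Real.cos (((c+(a:ℤ)+1:ℤ):ℝ)*x)))
        MeasureTheory.volume 0 π := by
      apply IntervalIntegrable.add <;>
        exact (continuous_const.mul ((contDD a).mul (cont_cosk _))).intervalIntegrable 0 π
    have i3 : IntervalIntegrable (fun x =>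
        2 * Real.cos ((c:ℝ)*x) + 2 * (Real.cos (((2*(a:ℤ)+2:ℤ):ℝ)*x) * Real.cos ((c:ℝ)*x)))
        MeasureTheory.volume 0 π := by
      apply IntervalIntegrable.add
      · exact (continuous_const.mul (cont_cosk c)).intervalIntegrable 0 π
      · exact (continuous_const.mul ((cont_cosk _).mul (cont_cosk c))).intervalIntegrable 0 π
    rw [key, intervalIntegral.integral_add (i1.add i2) i3, intervalIntegral.integral_add i1 i2]
    have j2 : (∫ x in (0:ℝ)..π,
        (2 * (DD a x * Real.cos (((c-(a:ℤ)-1:ℤ):ℝ)*x)) + 2 * (DD a x * Real.cos (((c+(a:ℤ)+1:ℤ):ℝ)*x)))) = 0 := by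
      rw [intervalIntegral.integral_add
          ((continuous_const.fun_mul ((contDD a).fun_mul (cont_cosk _))).intervalIntegrable 0 π)
          ((continuous_const.fun_mul ((contDD a).fun_mul (cont_cosk _))).intervalIntegrable 0 π),
        intervalIntegral.integral_const_mul, intervalIntegral.integral_const_mul,
        DDorth a _ (by omega), DDorth a _ (by omega)]
      ring
    have j3 : (∫ x in (0:ℝ)..π,
        (2 * Real.cos ((c:ℝ)*x) + 2 * (Real.cos (((2*(a:ℤ)+2:ℤ):ℝ)*x) * Real.cos ((c:ℝ)*x)))) = 0 := by
      rw [intervalIntegral.integral_add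
          ((continuous_const.fun_mul (cont_cosk c)).intervalIntegrable 0 π)
          ((continuous_const.fun_mul ((cont_cosk _).fun_mul (cont_cosk c))).intervalIntegrable 0 π),
        intervalIntegral.integral_const_mul, intervalIntegral.integral_const_mul,
        intcos_pi, ccpi, if_neg (by omega), if_neg (by omega), if_neg (by omega)]
      ring
    rw [ih c (by omega), j2, j3]
    ring



lemma DD0 (x : ℝ) : DD 0 x = 0 := rfl
lemma DD1 (x : ℝ) : DD 1 x = 1 := rfl
lemma DDstep (a : ℕ) (x : ℝ) : DD (a+2) x = DD a x + 2 * Real.cos (((a:ℝ)+1) * x) := rfl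


lemma DDsq : ∀ a : ℕ, ∫ x in (0:ℝ)..π, (DD a x)^2 = (a:ℝ)*π := by
  refine two_step ?_ ?_ ?_
  · simp [DD0]
  · have h : (fun x : ℝ => (DD 1 x)^2) = fun _ : ℝ => (1:ℝ) := by funext x; simp [DD1]
    rw [h]; simp
  · intro a ih
    have key : (fun x => (DD (a+2) x)^2)
        = fun x => (DD a x)^2
          + (4 * (DD a x * Real.cos ((((a+1:ℕ):ℤ):ℝ)*x))
          + 4 * (Real.cos ((((a+1:ℕ):ℤ):ℝ)*x) * Real.cos ((((a+1:ℕ):ℤ):ℝ)*x))) := by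
      funext x
      rw [DDstep]
      push_cast
      ring
    have i1 : IntervalIntegrable (fun x => (DD a x)^2) MeasureTheory.volume 0 π :=
      ((contDD a).pow 2).intervalIntegrable 0 π
    have i2 : IntervalIntegrable (fun x =>
        4 * (DD a x * Real.cos ((((a+1:ℕ):ℤ):ℝ)*x))
        + 4 * (Real.cos ((((a+1:ℕ):ℤ):ℝ)*x) * Real.cos ((((a+1:ℕ):ℤ):ℝ)*x))) MeasureTheory.volume 0 π := by
      apply IntervalIntegrable.add
      · exact (continuous_const.mul ((contDD a).mul (cont_cosk _))).intervalIntegrable 0 π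
      · exact (continuous_const.mul ((cont_cosk _).mul (cont_cosk _))).intervalIntegrable 0 π
    rw [key, intervalIntegral.integral_add i1 i2, ih, intervalIntegral.integral_add
        ((continuous_const.fun_mul ((contDD a).fun_mul (cont_cosk _))).intervalIntegrable 0 π)
        ((continuous_const.fun_mul ((cont_cosk _).fun_mul (cont_cosk _))).intervalIntegrable 0 π),
      intervalIntegral.integral_const_mul, intervalIntegral.integral_const_mul,
      DDorth a _ (by omega), ccpi, if_pos rfl, if_neg (by omega)]
    push_cast
    ring

lemma sinsin_eq (b c : ℕ) (x : ℝ) :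
    Real.sin ((b:ℝ)*x) * Real.sin ((c:ℝ)*x)
      = Real.cos ((((b:ℤ)-(c:ℤ):ℤ):ℝ)*x)/2 - Real.cos ((((b:ℤ)+(c:ℤ):ℤ):ℝ)*x)/2 := by
  push_cast
  rw [show ((b:ℝ)-c)*x = b*x - c*x by ring, show ((b:ℝ)+c)*x = b*x + c*x by ring,
    Real.cos_add, Real.cos_sub]
  ring

/-- `∫ sin(bx)^2 = π/2` on `[0,π]` for positive integer b -/
lemma sinsq_pi (b : ℕ) (hb : 0 < b) : ∫ x in (0:ℝ)..π, Real.sin ((b:ℝ)*x)^2 = π/2 := by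
  have key : (fun x => Real.sin ((b:ℝ)*x)^2)
      = fun x => 1/2 - Real.cos (((2*(b:ℤ):ℤ):ℝ)*x)/2 := by
    funext x
    have h := sinsin_eq b b x
    push_cast at h ⊢
    rw [show ((b:ℝ)-b)*x = 0 by ring, show ((b:ℝ)+b)*x = 2*(b:ℝ)*x by ring, Real.cos_zero] at h
    linear_combination h
  rw [key, intervalIntegral.integral_sub (intervalIntegrable_const)
      ((ii_cos (2*b) 0 π).div_const 2),
    intervalIntegral.integral_div, intervalIntegral.integral_div, intcos_pi, if_neg (by omega)]
  simp

/-- the central evaluation: `∫ (DD a)^2 sin(bx)^2 = a π/2` for `a ≤ b` -/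
lemma DDsinsq (a b : ℕ) (hab : a ≤ b) (hb : 0 < b) :
    ∫ x in (0:ℝ)..π, (DD a x)^2 * Real.sin ((b:ℝ)*x)^2 = (a:ℝ)*π/2 := by
  have key : (fun x => (DD a x)^2 * Real.sin ((b:ℝ)*x)^2)
      = fun x => (DD a x)^2 * (1/2) - ((DD a x)^2 * Real.cos (((2*(b:ℤ):ℤ):ℝ)*x)) * (1/2) := by
    funext x
    have h := sinsin_eq b b x
    push_cast at h ⊢
    rw [show ((b:ℝ)-b)*x = 0 by ring, show ((b:ℝ)+b)*x = 2*(b:ℝ)*x by ring, Real.cos_zero] at h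
    linear_combination (DD a x^2) * h
  rw [key, intervalIntegral.integral_sub
      ((((contDD a).fun_pow 2).fun_mul continuous_const).intervalIntegrable 0 π)
      (((((contDD a).fun_pow 2).fun_mul (cont_cosk (2*b))).fun_mul continuous_const).intervalIntegrable 0 π),
    intervalIntegral.integral_mul_const, intervalIntegral.integral_mul_const,
    DDsq, DDsq_orth a (2*b) (by omega)]
  ring

/-- vanishing of the resonant cross integral when `n ≥ 3N` -/
lemma K2zero (N n : ℕ) (h3 : 3*N ≤ n) :
    ∫ x in (0:ℝ)..π, (DD N x)^2 * (Real.sin ((n:ℝ)*x) * Real.sin ((N:ℝ)*x)) = 0 := by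
  have key : (fun x => (DD N x)^2 * (Real.sin ((n:ℝ)*x) * Real.sin ((N:ℝ)*x)))
      = fun x => ((DD N x)^2 * Real.cos ((((n:ℤ)-(N:ℤ):ℤ):ℝ)*x)) * (1/2)
        - ((DD N x)^2 * Real.cos ((((n:ℤ)+(N:ℤ):ℤ):ℝ)*x)) * (1/2) := by
    funext x
    rw [sinsin_eq n N x]
    ring
  rw [key, intervalIntegral.integral_sub
      (((((contDD N).fun_pow 2).fun_mul (cont_cosk _)).fun_mul continuous_const).intervalIntegrable 0 π)
      (((((contDD N).fun_pow 2).fun_mul (cont_cosk _)).fun_mul continuous_const).intervalIntegrable 0 π),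
    intervalIntegral.integral_mul_const, intervalIntegral.integral_mul_const,
    DDsq_orth N _ (by omega), DDsq_orth N _ (by omega)]
  ring


/-- ∫ cos(jτ)^2 over [0,2π] = π for j ≠ 0 -/
lemma cossq_2pi (j : ℤ) (hj : j ≠ 0) : ∫ τ in (0:ℝ)..(2*π), Real.cos ((j:ℝ)*τ)^2 = π := by
  have key : (fun τ => Real.cos ((j:ℝ)*τ)^2) = fun τ => Real.cos ((j:ℝ)*τ) * Real.cos ((j:ℝ)*τ) := by
    funext τ; ring
  rw [key, cc2pi, if_pos rfl, if_neg (by omega)]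
  ring

/-- ∫ cos(jτ)^4 over [0,2π] = 3π/4 for j ≠ 0 -/
lemma cos4_2pi (j : ℤ) (hj : j ≠ 0) : ∫ τ in (0:ℝ)..(2*π), Real.cos ((j:ℝ)*τ)^4 = 3*π/4 := by
  have key : (fun τ => Real.cos ((j:ℝ)*τ)^4)
      = fun τ => 3/8 + (Real.cos (((2*j:ℤ):ℝ)*τ)/2 + Real.cos (((4*j:ℤ):ℝ)*τ)/8) := by
    funext τ
    have h2 : Real.cos (((2*j:ℤ):ℝ)*τ) = 2 * Real.cos ((j:ℝ)*τ)^2 - 1 := by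
      push_cast
      rw [show (2:ℝ)*j*τ = 2*((j:ℝ)*τ) by ring, Real.cos_two_mul]
    have h4 : Real.cos (((4*j:ℤ):ℝ)*τ) = 2 * Real.cos (((2*j:ℤ):ℝ)*τ)^2 - 1 := by
      push_cast
      rw [show (4:ℝ)*j*τ = 2*(2*((j:ℝ)*τ)) by ring, Real.cos_two_mul,
        show (2:ℝ)*j*τ = 2*((j:ℝ)*τ) by ring]
    rw [h4, h2]
    ring
  rw [key, intervalIntegral.integral_add intervalIntegrable_const
      (((ii_cos (2*j) 0 (2*π)).div_const 2).add ((ii_cos (4*j) 0 (2*π)).div_const 8)),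
    intervalIntegral.integral_add ((ii_cos (2*j) 0 (2*π)).div_const 2) ((ii_cos (4*j) 0 (2*π)).div_const 8),
    intervalIntegral.integral_div]
  simp only [intervalIntegral.integral_div]
  rw [intcos_2pi, intcos_2pi, if_neg (by omega), if_neg (by omega)]
  simp
  ring

/-- ∫ cos(jτ)^2 cos(kτ)^2 over [0,2π] = π/2 for 0 ≠ |j| ≠ |k| ≠ 0 -/
lemma cossqsq_2pi (j k : ℤ) (hj : j ≠ 0) (hk : k ≠ 0) (hjk : j ≠ k) (hjk' : j ≠ -k) :
    ∫ τ in (0:ℝ)..(2*π), Real.cos ((j:ℝ)*τ)^2 * Real.cos ((k:ℝ)*τ)^2 = π/2 := by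
  have key : (fun τ => Real.cos ((j:ℝ)*τ)^2 * Real.cos ((k:ℝ)*τ)^2)
      = fun τ => 1/4 + (Real.cos (((2*j:ℤ):ℝ)*τ)/4 + Real.cos (((2*k:ℤ):ℝ)*τ)/4
        + (Real.cos (((2*j:ℤ):ℝ)*τ) * Real.cos (((2*k:ℤ):ℝ)*τ))/4) := by
    funext τ
    have h2j : Real.cos (((2*j:ℤ):ℝ)*τ) = 2 * Real.cos ((j:ℝ)*τ)^2 - 1 := by
      push_cast
      rw [show (2:ℝ)*j*τ = 2*((j:ℝ)*τ) by ring, Real.cos_two_mul]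
    have h2k : Real.cos (((2*k:ℤ):ℝ)*τ) = 2 * Real.cos ((k:ℝ)*τ)^2 - 1 := by
      push_cast
      rw [show (2:ℝ)*k*τ = 2*((k:ℝ)*τ) by ring, Real.cos_two_mul]
    rw [h2j, h2k]
    ring
  rw [key, intervalIntegral.integral_add intervalIntegrable_const
      ((((ii_cos (2*j) 0 (2*π)).div_const 4).add ((ii_cos (2*k) 0 (2*π)).div_const 4)).add
        ((((cont_cosk (2*j)).fun_mul (cont_cosk (2*k))).intervalIntegrable 0 (2*π)).div_const 4)),
    intervalIntegral.integral_add (((ii_cos (2*j) 0 (2*π)).div_const 4).add ((ii_cos (2*k) 0 (2*π)).div_const 4))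
      ((((cont_cosk (2*j)).fun_mul (cont_cosk (2*k))).intervalIntegrable 0 (2*π)).div_const 4),
    intervalIntegral.integral_add ((ii_cos (2*j) 0 (2*π)).div_const 4) ((ii_cos (2*k) 0 (2*π)).div_const 4),
    intervalIntegral.integral_div]
  simp only [intervalIntegral.integral_div]
  rw [intcos_2pi, intcos_2pi, cc2pi,
    if_neg (by omega), if_neg (by omega), if_neg (by omega), if_neg (by omega)]
  simp
  ring

/-- ∫ cos(jτ)^3 cos(kτ) over [0,2π] -/
lemma cos3cos_2pi (j k : ℤ) :
    ∫ τ in (0:ℝ)..(2*π), Real.cos ((j:ℝ)*τ)^3 * Real.cos ((k:ℝ)*τ)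
      = (3/4) * ((if j = k then π else 0) + (if j = -k then π else 0))
      + (1/4) * ((if 3*j = k then π else 0) + (if 3*j = -k then π else 0)) := by
  have key : (fun τ => Real.cos ((j:ℝ)*τ)^3 * Real.cos ((k:ℝ)*τ))
      = fun τ => (3/4) * (Real.cos ((j:ℝ)*τ) * Real.cos ((k:ℝ)*τ))
        + (1/4) * (Real.cos (((3*j:ℤ):ℝ)*τ) * Real.cos ((k:ℝ)*τ)) := by
    funext τ
    have h3 : Real.cos (((3*j:ℤ):ℝ)*τ) = 4 * Real.cos ((j:ℝ)*τ)^3 - 3 * Real.cos ((j:ℝ)*τ) := by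
      push_cast
      rw [show (3:ℝ)*j*τ = 3*((j:ℝ)*τ) by ring, Real.cos_three_mul]
    rw [h3]
    ring
  rw [key, intervalIntegral.integral_add
      ((((cont_cosk j).fun_mul (cont_cosk k)).intervalIntegrable 0 (2*π)).const_mul _)
      ((((cont_cosk (3*j)).fun_mul (cont_cosk k)).intervalIntegrable 0 (2*π)).const_mul _),
    intervalIntegral.integral_const_mul, intervalIntegral.integral_const_mul, cc2pi, cc2pi]


lemma hasD_cos (c k : ℝ) (t : ℝ) : HasDerivAt (fun s => c * Real.cos (k*s)) (-(c*k) * Real.sin (k*t)) t := by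
  have h : HasDerivAt (fun s : ℝ => k*s) k t := by
    simpa using (hasDerivAt_id t).const_mul k
  have h2 := ((Real.hasDerivAt_cos (k*t)).comp t h).const_mul c
  exact h2.congr_deriv (by ring)

lemma hasD_sin (c k : ℝ) (t : ℝ) : HasDerivAt (fun s => c * Real.sin (k*s)) ((c*k) * Real.cos (k*t)) t := by
  have h : HasDerivAt (fun s : ℝ => k*s) k t := by
    simpa using (hasDerivAt_id t).const_mul k
  have h2 := ((Real.hasDerivAt_sin (k*t)).comp t h).const_mul c
  exact h2.congr_deriv (by ring)

lemma dd_cos (c₁ c₂ k₁ k₂ : ℝ) :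
    deriv (deriv (fun t : ℝ => c₁ * Real.cos (k₁*t) + c₂ * Real.cos (k₂*t)))
      = fun τ => -(c₁*k₁^2) * Real.cos (k₁*τ) + -(c₂*k₂^2) * Real.cos (k₂*τ) := by
  have h1 : deriv (fun t : ℝ => c₁ * Real.cos (k₁*t) + c₂ * Real.cos (k₂*t))
      = fun t => (-(c₁*k₁)) * Real.sin (k₁*t) + (-(c₂*k₂)) * Real.sin (k₂*t) :=
    funext fun t => ((hasD_cos c₁ k₁ t).add (hasD_cos c₂ k₂ t)).deriv
  rw [h1]
  funext τ
  have h2 := ((hasD_sin (-(c₁*k₁)) k₁ τ).fun_add (hasD_sin (-(c₂*k₂)) k₂ τ)).deriv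
  rw [h2]
  ring

lemma dd_sin (c₁ c₂ k₁ k₂ : ℝ) :
    deriv (deriv (fun t : ℝ => c₁ * Real.sin (k₁*t) + c₂ * Real.sin (k₂*t)))
      = fun τ => -(c₁*k₁^2) * Real.sin (k₁*τ) + -(c₂*k₂^2) * Real.sin (k₂*τ) := by
  have h1 : deriv (fun t : ℝ => c₁ * Real.sin (k₁*t) + c₂ * Real.sin (k₂*t))
      = fun t => (c₁*k₁) * Real.cos (k₁*t) + (c₂*k₂) * Real.cos (k₂*t) :=
    funext fun t => ((hasD_sin c₁ k₁ t).add (hasD_sin c₂ k₂ t)).deriv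
  rw [h1]
  funext τ
  have h2 := ((hasD_cos (c₁*k₁) k₁ τ).fun_add (hasD_cos (c₂*k₂) k₂ τ)).deriv
  rw [h2]
  ring

lemma master (N n : ℕ) (hN : 0 < N) (hn : 0 < n) (hNn : N ≤ n) (g0 g1 g2 g3 g4 g5 g6 g7 : ℝ) :
    (∫ x in (0:ℝ)..π,
      (g0 * Real.sin ((N:ℝ)*x)^2 + g1 * Real.sin ((n:ℝ)*x)^2
       + g2 * (Real.sin ((n:ℝ)*x) * Real.sin ((N:ℝ)*x))
       + g3 * ((DD N x)^2 * Real.sin ((N:ℝ)*x)^2)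
       + g4 * ((DD N x)^2 * (Real.sin ((n:ℝ)*x) * Real.sin ((N:ℝ)*x)))
       + g5 * ((DD N x)^2 * Real.sin ((n:ℝ)*x)^2)
       + g6 * (DD N x * DD n x * Real.sin ((n:ℝ)*x)^2)
       + g7 * ((DD n x)^2 * Real.sin ((n:ℝ)*x)^2)))
    = g0 * (π/2) + g1 * (π/2)
      + g2 * (∫ x in (0:ℝ)..π, Real.sin ((n:ℝ)*x) * Real.sin ((N:ℝ)*x))
      + g3 * ((N:ℝ)*π/2)
      + g4 * (∫ x in (0:ℝ)..π, (DD N x)^2 * (Real.sin ((n:ℝ)*x) * Real.sin ((N:ℝ)*x)))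
      + g5 * ((N:ℝ)*π/2)
      + g6 * (∫ x in (0:ℝ)..π, DD N x * DD n x * Real.sin ((n:ℝ)*x)^2)
      + g7 * ((n:ℝ)*π/2) := by
  have csin : ∀ a : ℕ, Continuous fun x : ℝ => Real.sin ((a:ℝ)*x) := fun a =>
    Real.continuous_sin.comp (continuous_const.mul continuous_id)
  have c0 : Continuous fun x : ℝ => Real.sin ((N:ℝ)*x)^2 := (csin N).pow 2
  have c1 : Continuous fun x : ℝ => Real.sin ((n:ℝ)*x)^2 := (csin n).pow 2
  have c2 : Continuous fun x : ℝ => Real.sin ((n:ℝ)*x) * Real.sin ((N:ℝ)*x) := (csin n).mul (csin N)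
  have c3 : Continuous fun x : ℝ => (DD N x)^2 * Real.sin ((N:ℝ)*x)^2 := ((contDD N).pow 2).mul c0
  have c4 : Continuous fun x : ℝ => (DD N x)^2 * (Real.sin ((n:ℝ)*x) * Real.sin ((N:ℝ)*x)) :=
    ((contDD N).pow 2).mul c2
  have c5 : Continuous fun x : ℝ => (DD N x)^2 * Real.sin ((n:ℝ)*x)^2 := ((contDD N).pow 2).mul c1
  have c6 : Continuous fun x : ℝ => DD N x * DD n x * Real.sin ((n:ℝ)*x)^2 :=
    ((contDD N).mul (contDD n)).mul c1
  have c7 : Continuous fun x : ℝ => (DD n x)^2 * Real.sin ((n:ℝ)*x)^2 := ((contDD n).pow 2).mul c1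
  have i0 : IntervalIntegrable (fun x => g0 * Real.sin ((N:ℝ)*x)^2) MeasureTheory.volume (0:ℝ) π := (continuous_const.mul c0).intervalIntegrable (0:ℝ) π
  have i1 : IntervalIntegrable (fun x => g1 * Real.sin ((n:ℝ)*x)^2) MeasureTheory.volume (0:ℝ) π := (continuous_const.mul c1).intervalIntegrable (0:ℝ) π
  have i2 : IntervalIntegrable (fun x => g2 * (Real.sin ((n:ℝ)*x) * Real.sin ((N:ℝ)*x))) MeasureTheory.volume (0:ℝ) π := (continuous_const.mul c2).intervalIntegrable (0:ℝ) π
  have i3 : IntervalIntegrable (fun x => g3 * ((DD N x)^2 * Real.sin ((N:ℝ)*x)^2)) MeasureTheory.volume (0:ℝ) π := (continuous_const.mul c3).intervalIntegrable (0:ℝ) π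
  have i4 : IntervalIntegrable (fun x => g4 * ((DD N x)^2 * (Real.sin ((n:ℝ)*x) * Real.sin ((N:ℝ)*x)))) MeasureTheory.volume (0:ℝ) π := (continuous_const.mul c4).intervalIntegrable (0:ℝ) π
  have i5 : IntervalIntegrable (fun x => g5 * ((DD N x)^2 * Real.sin ((n:ℝ)*x)^2)) MeasureTheory.volume (0:ℝ) π := (continuous_const.mul c5).intervalIntegrable (0:ℝ) π
  have i6 : IntervalIntegrable (fun x => g6 * (DD N x * DD n x * Real.sin ((n:ℝ)*x)^2)) MeasureTheory.volume (0:ℝ) π := (continuous_const.mul c6).intervalIntegrable (0:ℝ) π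
  have i7 : IntervalIntegrable (fun x => g7 * ((DD n x)^2 * Real.sin ((n:ℝ)*x)^2)) MeasureTheory.volume (0:ℝ) π := (continuous_const.mul c7).intervalIntegrable (0:ℝ) π
  rw [intervalIntegral.integral_add ((((((i0.add i1).add i2).add i3).add i4).add i5).add i6) i7,
    intervalIntegral.integral_add (((((i0.add i1).add i2).add i3).add i4).add i5) i6,
    intervalIntegral.integral_add ((((i0.add i1).add i2).add i3).add i4) i5,
    intervalIntegral.integral_add (((i0.add i1).add i2).add i3) i4,
    intervalIntegral.integral_add ((i0.add i1).add i2) i3,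
    intervalIntegral.integral_add (i0.add i1) i2,
    intervalIntegral.integral_add i0 i1]
  simp only [intervalIntegral.integral_const_mul]
  rw [sinsq_pi N hN, sinsq_pi n hn, DDsinsq N N le_rfl hN, DDsinsq N n hNn hn, DDsinsq n n le_rfl hn]


/-- outer integral, first target -/
lemma outerA (m : ℤ) (hm : 3 ≤ m) (c0 c1 c2 c3 c4 c5 : ℝ) :
    (∫ τ in (0:ℝ)..(2*π),
      (c0 * Real.cos (((1:ℤ):ℝ)*τ)^2
       + c1 * (Real.cos ((m:ℝ)*τ) * Real.cos (((1:ℤ):ℝ)*τ))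
       + c2 * Real.cos (((1:ℤ):ℝ)*τ)^4
       + c3 * (Real.cos (((1:ℤ):ℝ)*τ)^3 * Real.cos ((m:ℝ)*τ))
       + c4 * (Real.cos (((1:ℤ):ℝ)*τ)^2 * Real.cos ((m:ℝ)*τ)^2)
       + c5 * (Real.cos ((m:ℝ)*τ)^3 * Real.cos (((1:ℤ):ℝ)*τ))))
    = c0 * π + c2 * (3*π/4) + c3 * ((if (3:ℤ) = m then π else 0)/4) + c4 * (π/2) := by
  have i0 : IntervalIntegrable (fun τ => c0 * Real.cos (((1:ℤ):ℝ)*τ)^2) MeasureTheory.volume 0 (2*π) :=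
    (continuous_const.mul ((cont_cosk 1).pow 2)).intervalIntegrable _ _
  have i1 : IntervalIntegrable (fun τ => c1 * (Real.cos ((m:ℝ)*τ) * Real.cos (((1:ℤ):ℝ)*τ))) MeasureTheory.volume 0 (2*π) :=
    (continuous_const.mul ((cont_cosk m).mul (cont_cosk 1))).intervalIntegrable _ _
  have i2 : IntervalIntegrable (fun τ => c2 * Real.cos (((1:ℤ):ℝ)*τ)^4) MeasureTheory.volume 0 (2*π) :=
    (continuous_const.mul ((cont_cosk 1).pow 4)).intervalIntegrable _ _
  have i3 : IntervalIntegrable (fun τ => c3 * (Real.cos (((1:ℤ):ℝ)*τ)^3 * Real.cos ((m:ℝ)*τ))) MeasureTheory.volume 0 (2*π) :=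
    (continuous_const.mul (((cont_cosk 1).pow 3).mul (cont_cosk m))).intervalIntegrable _ _
  have i4 : IntervalIntegrable (fun τ => c4 * (Real.cos (((1:ℤ):ℝ)*τ)^2 * Real.cos ((m:ℝ)*τ)^2)) MeasureTheory.volume 0 (2*π) :=
    (continuous_const.mul (((cont_cosk 1).pow 2).mul ((cont_cosk m).pow 2))).intervalIntegrable _ _
  have i5 : IntervalIntegrable (fun τ => c5 * (Real.cos ((m:ℝ)*τ)^3 * Real.cos (((1:ℤ):ℝ)*τ))) MeasureTheory.volume 0 (2*π) :=
    (continuous_const.mul (((cont_cosk m).pow 3).mul (cont_cosk 1))).intervalIntegrable _ _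
  rw [intervalIntegral.integral_add ((((i0.add i1).add i2).add i3).add i4) i5,
    intervalIntegral.integral_add (((i0.add i1).add i2).add i3) i4,
    intervalIntegral.integral_add ((i0.add i1).add i2) i3,
    intervalIntegral.integral_add (i0.add i1) i2,
    intervalIntegral.integral_add i0 i1]
  simp only [intervalIntegral.integral_const_mul]
  rw [cossq_2pi 1 (by omega), cc2pi m 1, cos4_2pi 1 (by omega), cos3cos_2pi 1 m,
    cossqsq_2pi 1 m (by omega) (by omega) (by omega) (by omega), cos3cos_2pi m 1]
  simp only [if_neg (show ¬(m:ℤ) = 1 by omega), if_neg (show ¬(m:ℤ) = -1 by omega),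
    if_neg (show ¬(1:ℤ) = m by omega), if_neg (show ¬(1:ℤ) = -m by omega),
    if_neg (show ¬(3*(1:ℤ)) = -m by omega), if_neg (show ¬(3*m:ℤ) = 1 by omega),
    if_neg (show ¬(3*m:ℤ) = -1 by omega), if_neg (show ¬(3:ℤ) = -m by omega), show (3*(1:ℤ)) = 3 from by norm_num]
  ring

/-- outer integral, second target -/
lemma outerB (m : ℤ) (hm : 3 ≤ m) (c0 c1 c2 c3 c4 c5 : ℝ) :
    (∫ τ in (0:ℝ)..(2*π),
      (c0 * Real.cos ((m:ℝ)*τ)^2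
       + c1 * (Real.cos (((1:ℤ):ℝ)*τ) * Real.cos ((m:ℝ)*τ))
       + c2 * (Real.cos (((1:ℤ):ℝ)*τ)^3 * Real.cos ((m:ℝ)*τ))
       + c3 * (Real.cos (((1:ℤ):ℝ)*τ)^2 * Real.cos ((m:ℝ)*τ)^2)
       + c4 * (Real.cos ((m:ℝ)*τ)^3 * Real.cos (((1:ℤ):ℝ)*τ))
       + c5 * Real.cos ((m:ℝ)*τ)^4))
    = c0 * π + c2 * ((if (3:ℤ) = m then π else 0)/4) + c3 * (π/2) + c5 * (3*π/4) := by
  have i0 : IntervalIntegrable (fun τ => c0 * Real.cos ((m:ℝ)*τ)^2) MeasureTheory.volume 0 (2*π) :=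
    (continuous_const.mul ((cont_cosk m).pow 2)).intervalIntegrable _ _
  have i1 : IntervalIntegrable (fun τ => c1 * (Real.cos (((1:ℤ):ℝ)*τ) * Real.cos ((m:ℝ)*τ))) MeasureTheory.volume 0 (2*π) :=
    (continuous_const.mul ((cont_cosk 1).mul (cont_cosk m))).intervalIntegrable _ _
  have i2 : IntervalIntegrable (fun τ => c2 * (Real.cos (((1:ℤ):ℝ)*τ)^3 * Real.cos ((m:ℝ)*τ))) MeasureTheory.volume 0 (2*π) :=
    (continuous_const.mul (((cont_cosk 1).pow 3).mul (cont_cosk m))).intervalIntegrable _ _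
  have i3 : IntervalIntegrable (fun τ => c3 * (Real.cos (((1:ℤ):ℝ)*τ)^2 * Real.cos ((m:ℝ)*τ)^2)) MeasureTheory.volume 0 (2*π) :=
    (continuous_const.mul (((cont_cosk 1).pow 2).mul ((cont_cosk m).pow 2))).intervalIntegrable _ _
  have i4 : IntervalIntegrable (fun τ => c4 * (Real.cos ((m:ℝ)*τ)^3 * Real.cos (((1:ℤ):ℝ)*τ))) MeasureTheory.volume 0 (2*π) :=
    (continuous_const.mul (((cont_cosk m).pow 3).mul (cont_cosk 1))).intervalIntegrable _ _
  have i5 : IntervalIntegrable (fun τ => c5 * Real.cos ((m:ℝ)*τ)^4) MeasureTheory.volume 0 (2*π) :=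
    (continuous_const.mul ((cont_cosk m).pow 4)).intervalIntegrable _ _
  rw [intervalIntegral.integral_add ((((i0.add i1).add i2).add i3).add i4) i5,
    intervalIntegral.integral_add (((i0.add i1).add i2).add i3) i4,
    intervalIntegral.integral_add ((i0.add i1).add i2) i3,
    intervalIntegral.integral_add (i0.add i1) i2,
    intervalIntegral.integral_add i0 i1]
  simp only [intervalIntegral.integral_const_mul]
  rw [cossq_2pi m (by omega), cc2pi 1 m, cos3cos_2pi 1 m,
    cossqsq_2pi 1 m (by omega) (by omega) (by omega) (by omega), cos3cos_2pi m 1,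
    cos4_2pi m (by omega)]
  simp only [if_neg (show ¬(m:ℤ) = 1 by omega), if_neg (show ¬(m:ℤ) = -1 by omega),
    if_neg (show ¬(1:ℤ) = m by omega), if_neg (show ¬(1:ℤ) = -m by omega),
    if_neg (show ¬(3*(1:ℤ)) = -m by omega), if_neg (show ¬(3*m:ℤ) = 1 by omega),
    if_neg (show ¬(3*m:ℤ) = -1 by omega), if_neg (show ¬(3:ℤ) = -m by omega), show (3*(1:ℤ)) = 3 from by norm_num]
  ring


/-- the two-mode reducible Galerkin system. -/
theorem two_mode_galerkin (N m n : ℕ) (hN : 0 < N) (hm : 0 < m) (hn : 0 < n)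
    (hmodd : Odd m) (hm3 : 3 ≤ m) (hparity : n % 2 = N % 2) (hnN : N ≤ n)
    (hred : 5 ≤ m ∨ 3 * N ≤ n) (A B Ω : ℝ)
    (u : ℝ → ℝ → ℝ)
    (hu : ∀ τ x : ℝ, u τ x
      = A * Real.cos τ * Real.sin (N * x) + B * Real.cos (m * τ) * Real.sin (n * x))
    (R : ℝ → ℝ → ℝ)
    (hR : ∀ τ x : ℝ, R τ x
      = Ω ^ 2 * deriv (deriv (fun t => u t x)) τ - deriv (deriv (fun y => u τ y)) x
        + (u τ x) ^ 3 / (Real.sin x) ^ 2) :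
    (∫ τ in (0:ℝ)..(2 * π), ∫ x in (0:ℝ)..π,
        R τ x * Real.cos τ * Real.sin (N * x))
      = (π ^ 2 / 8) * A * (3 * N * A ^ 2 + 6 * N * B ^ 2 - 4 * Ω ^ 2 + 4 * N ^ 2)
    ∧
    (∫ τ in (0:ℝ)..(2 * π), ∫ x in (0:ℝ)..π,
        R τ x * Real.cos (m * τ) * Real.sin (n * x))
      = (π ^ 2 / 8) * B * (6 * N * A ^ 2 + 3 * n * B ^ 2 - 4 * m ^ 2 * Ω ^ 2 + 4 * n ^ 2) := by
  have hπ2 : (0:ℝ) ≤ π := Real.pi_pos.le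
  have hane : ∀ᵐ (x:ℝ) ∂MeasureTheory.volume, x ≠ π := by
    refine MeasureTheory.ae_iff.2 ?_
    have h : {a : ℝ | ¬ a ≠ π} = {π} := by ext y; simp
    rw [h]
    exact MeasureTheory.measure_singleton π
  have hdτ : ∀ τ x : ℝ, deriv (deriv (fun t => u t x)) τ
      = -(A * Real.sin ((N:ℝ)*x) * 1^2) * Real.cos (1*τ)
        + -(B * Real.sin ((n:ℝ)*x) * (m:ℝ)^2) * Real.cos ((m:ℝ)*τ) := by
    intro τ x
    have hfun : (fun t => u t x) = fun t => (A * Real.sin ((N:ℝ)*x)) * Real.cos (1*t)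
        + (B * Real.sin ((n:ℝ)*x)) * Real.cos ((m:ℝ)*t) := by
      funext t
      rw [hu, one_mul]
      ring
    rw [hfun, dd_cos]
  have hdx : ∀ τ x : ℝ, deriv (deriv (fun y => u τ y)) x
      = -(A * Real.cos τ * (N:ℝ)^2) * Real.sin ((N:ℝ)*x)
        + -(B * Real.cos ((m:ℝ)*τ) * (n:ℝ)^2) * Real.sin ((n:ℝ)*x) := by
    intro τ x
    have hfun : (fun y => u τ y) = fun y => (A * Real.cos τ) * Real.sin ((N:ℝ)*y)
        + (B * Real.cos ((m:ℝ)*τ)) * Real.sin ((n:ℝ)*y) := funext fun y => hu τ y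
    rw [hfun, dd_sin]
  constructor
  · -- first projection
    have hin1 : ∀ τ : ℝ, (∫ x in (0:ℝ)..π, R τ x * Real.cos τ * Real.sin ((N:ℝ) * x))
        = (A*((N:ℝ)^2 - Ω^2)*(π/2)) * Real.cos (((1:ℤ):ℝ)*τ)^2
          + (B*((n:ℝ)^2 - (m:ℝ)^2*Ω^2)*(∫ x in (0:ℝ)..π, Real.sin ((n:ℝ)*x) * Real.sin ((N:ℝ)*x)))
              * (Real.cos (((m:ℤ):ℝ)*τ) * Real.cos (((1:ℤ):ℝ)*τ))
          + (A^3*((N:ℝ)*π/2)) * Real.cos (((1:ℤ):ℝ)*τ)^4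
          + (3*A^2*B*(∫ x in (0:ℝ)..π, (DD N x)^2 * (Real.sin ((n:ℝ)*x) * Real.sin ((N:ℝ)*x))))
              * (Real.cos (((1:ℤ):ℝ)*τ)^3 * Real.cos (((m:ℤ):ℝ)*τ))
          + (3*A*B^2*((N:ℝ)*π/2)) * (Real.cos (((1:ℤ):ℝ)*τ)^2 * Real.cos (((m:ℤ):ℝ)*τ)^2)
          + (B^3*(∫ x in (0:ℝ)..π, DD N x * DD n x * Real.sin ((n:ℝ)*x)^2))
              * (Real.cos (((m:ℤ):ℝ)*τ)^3 * Real.cos (((1:ℤ):ℝ)*τ)) := by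
      intro τ
      have hcg : (∫ x in (0:ℝ)..π, R τ x * Real.cos τ * Real.sin ((N:ℝ) * x))
          = ∫ x in (0:ℝ)..π,
            ((A*((N:ℝ)^2-Ω^2)*Real.cos τ*Real.cos τ) * Real.sin ((N:ℝ)*x)^2
             + 0 * Real.sin ((n:ℝ)*x)^2
             + (B*((n:ℝ)^2-(m:ℝ)^2*Ω^2)*Real.cos ((m:ℝ)*τ)*Real.cos τ)
                * (Real.sin ((n:ℝ)*x) * Real.sin ((N:ℝ)*x))
             + (A^3*Real.cos τ^3*Real.cos τ) * ((DD N x)^2 * Real.sin ((N:ℝ)*x)^2)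
             + (3*A^2*B*Real.cos τ^2*Real.cos ((m:ℝ)*τ)*Real.cos τ)
                * ((DD N x)^2 * (Real.sin ((n:ℝ)*x) * Real.sin ((N:ℝ)*x)))
             + (3*A*B^2*Real.cos τ*Real.cos ((m:ℝ)*τ)^2*Real.cos τ)
                * ((DD N x)^2 * Real.sin ((n:ℝ)*x)^2)
             + (B^3*Real.cos ((m:ℝ)*τ)^3*Real.cos τ) * (DD N x * DD n x * Real.sin ((n:ℝ)*x)^2)
             + 0 * ((DD n x)^2 * Real.sin ((n:ℝ)*x)^2)) := by
        apply intervalIntegral.integral_congr_ae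
        filter_upwards [hane] with x hxπ hmem
        rw [Set.uIoc_of_le hπ2] at hmem
        have hsin : Real.sin x ≠ 0 :=
          ne_of_gt (Real.sin_pos_of_pos_of_lt_pi hmem.1 (lt_of_le_of_ne hmem.2 hxπ))
        rw [hR, hdτ, hdx, hu, sinDD N x, sinDD n x, one_mul, one_pow]
        field_simp
        ring
      rw [hcg, master N n hN hn hnN]
      push_cast
      set I1 : ℝ := ∫ x in (0:ℝ)..π, Real.sin ((n:ℝ)*x) * Real.sin ((N:ℝ)*x) with hI1
      set I2 : ℝ := ∫ x in (0:ℝ)..π, (DD N x)^2 * (Real.sin ((n:ℝ)*x) * Real.sin ((N:ℝ)*x)) with hI2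
      set I3 : ℝ := ∫ x in (0:ℝ)..π, DD N x * DD n x * Real.sin ((n:ℝ)*x)^2 with hI3
      ring
    rw [show (fun τ => ∫ x in (0:ℝ)..π, R τ x * Real.cos τ * Real.sin ((N:ℝ) * x)) = _
        from funext hin1, outerA (m:ℤ) (by exact_mod_cast hm3)]
    rcases hred with h5 | h3n
    · rw [if_neg (by omega)]
      push_cast
      ring
    · rw [K2zero N n h3n]
      push_cast
      ring
  · -- second projection
    have hin2 : ∀ τ : ℝ, (∫ x in (0:ℝ)..π, R τ x * Real.cos ((m:ℝ)*τ) * Real.sin ((n:ℝ) * x))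
        = (B*((n:ℝ)^2 - (m:ℝ)^2*Ω^2)*(π/2)) * Real.cos (((m:ℤ):ℝ)*τ)^2
          + (A*((N:ℝ)^2 - Ω^2)*(∫ x in (0:ℝ)..π, Real.sin ((n:ℝ)*x) * Real.sin ((N:ℝ)*x)))
              * (Real.cos (((1:ℤ):ℝ)*τ) * Real.cos (((m:ℤ):ℝ)*τ))
          + (A^3*(∫ x in (0:ℝ)..π, (DD N x)^2 * (Real.sin ((n:ℝ)*x) * Real.sin ((N:ℝ)*x))))
              * (Real.cos (((1:ℤ):ℝ)*τ)^3 * Real.cos (((m:ℤ):ℝ)*τ))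
          + (3*A^2*B*((N:ℝ)*π/2)) * (Real.cos (((1:ℤ):ℝ)*τ)^2 * Real.cos (((m:ℤ):ℝ)*τ)^2)
          + (3*A*B^2*(∫ x in (0:ℝ)..π, DD N x * DD n x * Real.sin ((n:ℝ)*x)^2))
              * (Real.cos (((m:ℤ):ℝ)*τ)^3 * Real.cos (((1:ℤ):ℝ)*τ))
          + (B^3*((n:ℝ)*π/2)) * Real.cos (((m:ℤ):ℝ)*τ)^4 := by
      intro τ
      have hcg : (∫ x in (0:ℝ)..π, R τ x * Real.cos ((m:ℝ)*τ) * Real.sin ((n:ℝ) * x))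
          = ∫ x in (0:ℝ)..π,
            (0 * Real.sin ((N:ℝ)*x)^2
             + (B*((n:ℝ)^2-(m:ℝ)^2*Ω^2)*Real.cos ((m:ℝ)*τ)*Real.cos ((m:ℝ)*τ)) * Real.sin ((n:ℝ)*x)^2
             + (A*((N:ℝ)^2-Ω^2)*Real.cos τ*Real.cos ((m:ℝ)*τ))
                * (Real.sin ((n:ℝ)*x) * Real.sin ((N:ℝ)*x))
             + 0 * ((DD N x)^2 * Real.sin ((N:ℝ)*x)^2)
             + (A^3*Real.cos τ^3*Real.cos ((m:ℝ)*τ))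
                * ((DD N x)^2 * (Real.sin ((n:ℝ)*x) * Real.sin ((N:ℝ)*x)))
             + (3*A^2*B*Real.cos τ^2*Real.cos ((m:ℝ)*τ)*Real.cos ((m:ℝ)*τ))
                * ((DD N x)^2 * Real.sin ((n:ℝ)*x)^2)
             + (3*A*B^2*Real.cos τ*Real.cos ((m:ℝ)*τ)^2*Real.cos ((m:ℝ)*τ))
                * (DD N x * DD n x * Real.sin ((n:ℝ)*x)^2)
             + (B^3*Real.cos ((m:ℝ)*τ)^3*Real.cos ((m:ℝ)*τ)) * ((DD n x)^2 * Real.sin ((n:ℝ)*x)^2)) := by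
        apply intervalIntegral.integral_congr_ae
        filter_upwards [hane] with x hxπ hmem
        rw [Set.uIoc_of_le hπ2] at hmem
        have hsin : Real.sin x ≠ 0 :=
          ne_of_gt (Real.sin_pos_of_pos_of_lt_pi hmem.1 (lt_of_le_of_ne hmem.2 hxπ))
        rw [hR, hdτ, hdx, hu, sinDD N x, sinDD n x, one_mul, one_pow]
        field_simp
        ring
      rw [hcg, master N n hN hn hnN]
      push_cast
      set I1 : ℝ := ∫ x in (0:ℝ)..π, Real.sin ((n:ℝ)*x) * Real.sin ((N:ℝ)*x) with hI1
      set I2 : ℝ := ∫ x in (0:ℝ)..π, (DD N x)^2 * (Real.sin ((n:ℝ)*x) * Real.sin ((N:ℝ)*x)) with hI2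
      set I3 : ℝ := ∫ x in (0:ℝ)..π, DD N x * DD n x * Real.sin ((n:ℝ)*x)^2 with hI3
      ring
    rw [show (fun τ => ∫ x in (0:ℝ)..π, R τ x * Real.cos ((m:ℝ)*τ) * Real.sin ((n:ℝ) * x)) = _
        from funext hin2, outerB (m:ℤ) (by exact_mod_cast hm3)]
    rcases hred with h5 | h3n
    · rw [if_neg (by omega)]
      push_cast
      ring
    · rw [K2zero N n h3n]
      push_cast
      ring
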